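/- Let P, P̂, P̄ be transition kernels on S×A with, for every (x,a), the support of P(·|x,a) contained in the supports of both P̂(·|x,a) and P̄(·|x,a); let r : S×A → ℝ, γ ∈ [0,1), and φ₁,…,φ_d : S → ℝ. Assume: (i) for every (x,a) and every i, ∑_y P̄(y|x,a)·φᵢ(y) = ∑_y P(y|x,a)·φᵢ(y); (ii) for every (x,a), KL(P(·|x,a)‖P̄(·|x,a)) ≤ KL(P(·|x,a)‖P̂(·|x,a)). Set ε := max_{(x,a)} √(KL(P(·|x,a)‖P̂(·|x,a))) and c₁ := γ√2/(1−γ). Then for every stochastic policy π and every w ∈ ℝ^d, ‖V^π(r,P) − V^π(r,P̄)‖∞ ≤ c₁·ε·‖V^π(r,P) − ∑_{i=1}^d wᵢφᵢ‖∞. -/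

import Mathlib

set_option linter.unusedSectionVars false
set_option linter.unusedVariables false
set_option linter.unnecessarySeqFocus false

open Finset Matrix

/-- Supremum norm of a vector indexed by a finite type. -/
noncomputable def supNorm {S : Type*} [Fintype S] (v : S → ℝ) : ℝ := ⨆ x, |v x|

/-- KL divergence of finitely supported probability vectors,
with the convention `0 * log 0 = 0` (automatic since `Real.log 0 = 0`). -/
noncomputable def KLfin {S : Type*} [Fintype S] (p q : S → ℝ) : ℝ :=
  ∑ y, p y * Real.log (p y / q y)

/-- The row-stochastic matrix `P^π` induced by a stochastic policy `π`. -/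
noncomputable def stocMat {S A : Type*} [Fintype A]
    (P : S → A → S → ℝ) (π : S → A → ℝ) : Matrix S S ℝ :=
  Matrix.of fun x y => ∑ a, π x a * P x a y

/-- The value function `V^π(r,P) = (I - γ P^π)⁻¹ r^π` of a stochastic policy `π`. -/
noncomputable def stocVal {S A : Type*} [Fintype S] [DecidableEq S] [Fintype A]
    (γ : ℝ) (r : S → A → ℝ) (P : S → A → S → ℝ) (π : S → A → ℝ) : S → ℝ :=
  ((1 : Matrix S S ℝ) - γ • stocMat P π)⁻¹.mulVec (fun x => ∑ a, π x a * r x a)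

/-! ### Auxiliary calculus lemmas for Pinsker's inequality -/

noncomputable def Ffn (t : ℝ) : ℝ := Real.log t - 3*(t-1)*(t+5)/(2*(t+2)^2)
noncomputable def Gfn (t : ℝ) : ℝ := t*Real.log t - t + 1 - 3*(t-1)^2/(2*(t+2))

lemma Ffn_hasDeriv {t : ℝ} (ht : 0 < t) :
    HasDerivAt Ffn ((t-1)^2*(t+8)/(t*(t+2)^3)) t := by
  have h2 : t + 2 ≠ 0 := by linarith
  have h2' : 2*(t+2)^2 ≠ 0 := by positivity
  have hlog : HasDerivAt Real.log t⁻¹ t := Real.hasDerivAt_log ht.ne'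
  have hu : HasDerivAt (fun t : ℝ => 3*(t-1)*(t+5)) (3*((t+5)+(t-1))) t := by
    have := ((hasDerivAt_id t).sub_const 1).const_mul (3:ℝ)
    have := (this.mul ((hasDerivAt_id t).add_const 5))
    refine this.congr_deriv ?_ <;> (simp only [id_eq]; ring)
  have hv : HasDerivAt (fun t : ℝ => 2*(t+2)^2) (2*(2*(t+2))) t := by
    have := (((hasDerivAt_id t).add_const 2).pow 2).const_mul (2:ℝ)
    refine this.congr_deriv ?_ <;> (simp only [id_eq]; ring)
  have h := hlog.sub (hu.div hv h2')
  refine h.congr_deriv ?_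
  field_simp
  ring

lemma Gfn_hasDeriv {t : ℝ} (ht : 0 < t) : HasDerivAt Gfn (Ffn t) t := by
  have h2 : t + 2 ≠ 0 := by linarith
  have h2' : 2*(t+2) ≠ 0 := by positivity
  have hlog : HasDerivAt (fun t : ℝ => t * Real.log t) (Real.log t + 1) t := by
    have := (hasDerivAt_id t).mul (Real.hasDerivAt_log ht.ne')
    refine this.congr_deriv ?_
    simp only [id_eq]
    field_simp
  have hu : HasDerivAt (fun t : ℝ => 3*(t-1)^2) (3*(2*(t-1))) t := by
    have := (((hasDerivAt_id t).sub_const 1).pow 2).const_mul (3:ℝ)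
    refine this.congr_deriv ?_ <;> (simp only [id_eq]; ring)
  have hv : HasDerivAt (fun t : ℝ => 2*(t+2)) (2:ℝ) t := by
    have := ((hasDerivAt_id t).add_const 2).const_mul (2:ℝ)
    refine this.congr_deriv ?_
    norm_num
  have h := ((hlog.sub (hasDerivAt_id t)).add_const 1).sub ((hu.div hv h2'))
  refine h.congr_deriv ?_
  unfold Ffn
  field_simp
  ring

lemma Ffn_mono : MonotoneOn Ffn (Set.Ioi (0:ℝ)) := by
  have hint : interior (Set.Ioi (0:ℝ)) = Set.Ioi 0 := interior_Ioi
  apply monotoneOn_of_deriv_nonneg (convex_Ioi 0)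
  · intro x hx
    exact (Ffn_hasDeriv hx).continuousAt.continuousWithinAt
  · intro x hx
    rw [hint] at hx
    exact (Ffn_hasDeriv hx).differentiableAt.differentiableWithinAt
  · intro x hx
    rw [hint] at hx
    rw [(Ffn_hasDeriv hx).deriv]
    have hx' : (0:ℝ) < x := hx
    have h1 : (0:ℝ) ≤ (x-1)^2*(x+8) := by nlinarith [sq_nonneg (x-1)]
    positivity

lemma Ffn_one : Ffn 1 = 0 := by simp [Ffn]
lemma Gfn_one : Gfn 1 = 0 := by simp [Gfn]

lemma Gfn_nonneg {t : ℝ} (ht : 0 ≤ t) : 0 ≤ Gfn t := by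
  rcases le_or_gt t 1 with h1 | h1
  · have hcont : ContinuousOn Gfn (Set.Icc 0 1) := by
      unfold Gfn
      apply ContinuousOn.sub
      · exact ((Real.continuous_mul_log.sub continuous_id').continuousOn).add continuousOn_const
      · apply ContinuousOn.div
        · exact (continuous_const.mul ((continuous_id'.sub continuous_const).pow 2)).continuousOn
        · exact (continuous_const.mul (continuous_id'.add continuous_const)).continuousOn
        · intro x hx
          have : (0:ℝ) ≤ x := hx.1
          positivity
    have hanti : AntitoneOn Gfn (Set.Icc 0 1) := by
      apply antitoneOn_of_deriv_nonpos (convex_Icc 0 1) hcont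
      · intro x hx
        rw [interior_Icc] at hx
        exact (Gfn_hasDeriv hx.1).differentiableAt.differentiableWithinAt
      · intro x hx
        rw [interior_Icc] at hx
        rw [(Gfn_hasDeriv hx.1).deriv, ← Ffn_one]
        exact Ffn_mono (Set.mem_Ioi.2 hx.1) (Set.mem_Ioi.2 one_pos) hx.2.le
    have := hanti (Set.mem_Icc.2 ⟨ht, h1⟩) (Set.mem_Icc.2 ⟨zero_le_one, le_rfl⟩) h1
    rwa [Gfn_one] at this
  · have hmono : MonotoneOn Gfn (Set.Ici 1) := by
      apply monotoneOn_of_deriv_nonneg (convex_Ici 1)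
      · intro x hx
        have : (0:ℝ) < x := lt_of_lt_of_le one_pos hx
        exact (Gfn_hasDeriv this).continuousAt.continuousWithinAt
      · intro x hx
        rw [interior_Ici] at hx
        have : (0:ℝ) < x := lt_trans one_pos hx
        exact (Gfn_hasDeriv this).differentiableAt.differentiableWithinAt
      · intro x hx
        rw [interior_Ici] at hx
        have hx0 : (0:ℝ) < x := lt_trans one_pos hx
        rw [(Gfn_hasDeriv hx0).deriv, ← Ffn_one]
        exact Ffn_mono (Set.mem_Ioi.2 one_pos) (Set.mem_Ioi.2 hx0) hx.le
    have := hmono (Set.mem_Ici.2 le_rfl) (Set.mem_Ici.2 h1.le) h1.le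
    rwa [Gfn_one] at this

lemma Gfn_nonneg' {t : ℝ} (ht : 0 ≤ t) :
    0 ≤ t*Real.log t - t + 1 - 3*(t-1)^2/(2*(t+2)) := Gfn_nonneg ht

/-! ### Pinsker's inequality for finite probability vectors -/

lemma pointwise_pinsker {a b : ℝ} (ha : 0 ≤ a) (hb : 0 ≤ b) (hab : b = 0 → a = 0) :
    3*(a-b)^2/(2*(a+2*b)) ≤ a*Real.log (a/b) - a + b := by
  rcases eq_or_lt_of_le hb with hb0 | hb0
  · rw [hab hb0.symm, ← hb0]
    norm_num
  · set t := a/b with htdef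
    have ht0 : 0 ≤ t := div_nonneg ha hb0.le
    have hat : a = t*b := (div_mul_cancel₀ a hb0.ne').symm
    have hkey : 3*(t-1)^2 ≤ (t*Real.log t - t + 1) * (2*(t+2)) := by
      have h := Gfn_nonneg' ht0
      have h2 : (0:ℝ) < 2*(t+2) := by linarith
      have h' : 3*(t-1)^2/(2*(t+2)) ≤ t*Real.log t - t + 1 := by linarith
      rwa [div_le_iff₀ h2] at h'
    have hlt : Real.log (a/b) = Real.log t := rfl
    rw [hlt, hat]
    have hd : (0:ℝ) < 2*(t*b+2*b) := by nlinarith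
    rw [div_le_iff₀ hd]
    nlinarith [mul_le_mul_of_nonneg_left hkey (sq_nonneg b), sq_nonneg b, hb0]

lemma pinsker_fin {S : Type*} [Fintype S] (p q : S → ℝ)
    (hp0 : ∀ y, 0 ≤ p y) (hq0 : ∀ y, 0 ≤ q y)
    (hp1 : ∑ y, p y = 1) (hq1 : ∑ y, q y = 1)
    (hsupp : ∀ y, q y = 0 → p y = 0) :
    ∑ y, |p y - q y| ≤ Real.sqrt (2 * KLfin p q) := by
  set f : S → ℝ := fun y => Real.sqrt (3*(p y - q y)^2/(2*(p y + 2*q y)))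
  set g : S → ℝ := fun y => Real.sqrt (2*(p y + 2*q y)/3)
  have hfg : ∀ y, |p y - q y| = f y * g y := by
    intro y
    rcases eq_or_lt_of_le (by nlinarith [hp0 y, hq0 y] : (0:ℝ) ≤ p y + 2*q y) with h0 | h0
    · have hq : q y = 0 := by nlinarith [hp0 y, hq0 y]
      have hp : p y = 0 := hsupp y hq
      simp [f, g, hp, hq]
    · have : f y * g y = Real.sqrt ((3*(p y - q y)^2/(2*(p y + 2*q y))) * (2*(p y + 2*q y)/3)) := by
        rw [← Real.sqrt_mul (by have h3 := sq_nonneg (p y - q y); positivity)]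
      rw [this]
      have he : (3*(p y - q y)^2/(2*(p y + 2*q y))) * (2*(p y + 2*q y)/3) = (p y - q y)^2 := by
        have : p y + q y * 2 ≠ 0 := by linarith
        field_simp
      rw [he, Real.sqrt_sq_eq_abs]
  have hQle : ∑ y, (f y)^2 ≤ KLfin p q := by
    have hKL : KLfin p q = ∑ y, (p y * Real.log (p y / q y) - p y + q y) := by
      unfold KLfin
      rw [Finset.sum_add_distrib, Finset.sum_sub_distrib, hp1, hq1]
      ring
    rw [hKL]
    apply Finset.sum_le_sum
    intro y _
    have hf2 : (f y)^2 = 3*(p y - q y)^2/(2*(p y + 2*q y)) := by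
      apply Real.sq_sqrt
      apply div_nonneg (by positivity)
      nlinarith [hp0 y, hq0 y]
    rw [hf2]
    exact pointwise_pinsker (hp0 y) (hq0 y) (hsupp y)
  have hg2 : ∑ y, (g y)^2 = 2 := by
    have : ∀ y, (g y)^2 = 2*(p y + 2*q y)/3 := by
      intro y
      apply Real.sq_sqrt
      apply div_nonneg _ (by norm_num)
      nlinarith [hp0 y, hq0 y]
    simp only [this]
    rw [← Finset.sum_div]
    rw [← Finset.mul_sum, Finset.sum_add_distrib, hp1, ← Finset.mul_sum, hq1]
    norm_num
  have hCS : (∑ y, f y * g y)^2 ≤ (∑ y, (f y)^2) * ∑ y, (g y)^2 :=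
    Finset.sum_mul_sq_le_sq_mul_sq _ f g
  have habs : (∑ y, |p y - q y|)^2 ≤ 2 * KLfin p q := by
    calc (∑ y, |p y - q y|)^2 = (∑ y, f y * g y)^2 := by
          congr 1; exact Finset.sum_congr rfl fun y _ => hfg y
      _ ≤ (∑ y, (f y)^2) * ∑ y, (g y)^2 := hCS
      _ = (∑ y, (f y)^2) * 2 := by rw [hg2]
      _ ≤ KLfin p q * 2 := mul_le_mul_of_nonneg_right hQle (by norm_num)
      _ = 2 * KLfin p q := by ring
  have hnn : (0:ℝ) ≤ ∑ y, |p y - q y| := Finset.sum_nonneg fun y _ => abs_nonneg _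
  calc ∑ y, |p y - q y| = Real.sqrt ((∑ y, |p y - q y|)^2) := (Real.sqrt_sq hnn).symm
    _ ≤ Real.sqrt (2 * KLfin p q) := Real.sqrt_le_sqrt habs

/-! ### supNorm lemmas -/

section supNormLemmas
variable {S : Type*} [Fintype S] [Nonempty S]

lemma abs_le_supNorm (v : S → ℝ) (x : S) : |v x| ≤ supNorm v := by
  unfold supNorm
  exact le_ciSup (Set.Finite.bddAbove (Set.finite_range fun x => |v x|)) x

lemma supNorm_le {v : S → ℝ} {c : ℝ} (h : ∀ x, |v x| ≤ c) : supNorm v ≤ c :=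
  ciSup_le h

lemma supNorm_nonneg (v : S → ℝ) : 0 ≤ supNorm v :=
  le_trans (abs_nonneg _) (abs_le_supNorm v (Classical.arbitrary S))

lemma supNorm_exists (v : S → ℝ) : ∃ x, supNorm v = |v x| := by
  obtain ⟨x, hx⟩ := Finite.exists_max (fun x => |v x|)
  exact ⟨x, le_antisymm (supNorm_le hx) (abs_le_supNorm v x)⟩

end supNormLemmas

/-! ### Matrix lemmas -/

section matrixLemmas
variable {S : Type*} [Fintype S] [Nonempty S] [DecidableEq S]

lemma contraction_bound {γ : ℝ} (hγ0 : 0 ≤ γ) (hγ1 : γ < 1)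
    (N : Matrix S S ℝ) (hN0 : ∀ x y, 0 ≤ N x y) (hN1 : ∀ x, ∑ y, N x y = 1)
    (v : S → ℝ) :
    (1 - γ) * supNorm v ≤ supNorm (((1 : Matrix S S ℝ) - γ • N).mulVec v) := by
  obtain ⟨x, hx⟩ := supNorm_exists v
  have hentry : ((1 : Matrix S S ℝ) - γ • N).mulVec v x = v x - γ * ∑ y, N x y * v y := by
    rw [sub_mulVec, one_mulVec, smul_mulVec]
    simp [Matrix.mulVec, dotProduct]
  have hsum : |∑ y, N x y * v y| ≤ supNorm v := by
    calc |∑ y, N x y * v y| ≤ ∑ y, |N x y * v y| := Finset.abs_sum_le_sum_abs _ _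
      _ ≤ ∑ y, N x y * supNorm v := by
          apply Finset.sum_le_sum
          intro y _
          rw [abs_mul, abs_of_nonneg (hN0 x y)]
          exact mul_le_mul_of_nonneg_left (abs_le_supNorm v y) (hN0 x y)
      _ = supNorm v := by rw [← Finset.sum_mul, hN1, one_mul]
  calc (1 - γ) * supNorm v = |v x| - γ * supNorm v := by rw [← hx]; ring
    _ ≤ |v x - γ * ∑ y, N x y * v y| := by
        have h1 : γ * |∑ y, N x y * v y| ≤ γ * supNorm v :=
          mul_le_mul_of_nonneg_left hsum hγ0
        have h2 := abs_sub_abs_le_abs_sub (v x) (γ * ∑ y, N x y * v y)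
        have h3 : |γ * ∑ y, N x y * v y| = γ * |∑ y, N x y * v y| := by
          rw [abs_mul, abs_of_nonneg hγ0]
        linarith
    _ = |((1 : Matrix S S ℝ) - γ • N).mulVec v x| := by rw [hentry]
    _ ≤ supNorm (((1 : Matrix S S ℝ) - γ • N).mulVec v) := abs_le_supNorm _ x

lemma isUnit_one_sub_smul {γ : ℝ} (hγ0 : 0 ≤ γ) (hγ1 : γ < 1)
    (N : Matrix S S ℝ) (hN0 : ∀ x y, 0 ≤ N x y) (hN1 : ∀ x, ∑ y, N x y = 1) :
    IsUnit ((1 : Matrix S S ℝ) - γ • N) := by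
  rw [← Matrix.mulVec_injective_iff_isUnit]
  intro v w hvw
  have h0 : ((1 : Matrix S S ℝ) - γ • N).mulVec (v - w) = 0 := by
    rw [Matrix.mulVec_sub, hvw, sub_self]
  have hcb := contraction_bound hγ0 hγ1 N hN0 hN1 (v - w)
  rw [h0] at hcb
  have hz : supNorm (0 : S → ℝ) = 0 := by simp [supNorm]
  rw [hz] at hcb
  have hle : supNorm (v - w) ≤ 0 := by nlinarith [supNorm_nonneg (v - w)]
  funext x
  have h1 : |v x - w x| ≤ 0 := by
    simpa using le_trans (abs_le_supNorm (v - w) x) hle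
  have h2 : |v x - w x| = 0 := le_antisymm h1 (abs_nonneg _)
  have := sub_eq_zero.mp (abs_eq_zero.mp h2)
  linarith

end matrixLemmas

/-! ### Main theorem -/

theorem stmt4 {S A : Type*} [Fintype S] [Nonempty S] [DecidableEq S] [Fintype A] [Nonempty A]
    (P Phat Pbar : S → A → S → ℝ)
    (hP0 : ∀ x a y, 0 ≤ P x a y) (hP1 : ∀ x a, ∑ y, P x a y = 1)
    (hPhat0 : ∀ x a y, 0 ≤ Phat x a y) (hPhat1 : ∀ x a, ∑ y, Phat x a y = 1)
    (hPbar0 : ∀ x a y, 0 ≤ Pbar x a y) (hPbar1 : ∀ x a, ∑ y, Pbar x a y = 1)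
    (hsupphat : ∀ x a y, Phat x a y = 0 → P x a y = 0)
    (hsuppbar : ∀ x a y, Pbar x a y = 0 → P x a y = 0)
    (r : S → A → ℝ) (γ : ℝ) (hγ0 : 0 ≤ γ) (hγ1 : γ < 1)
    (d : ℕ) (φ : Fin d → S → ℝ)
    (hmatch : ∀ x a, ∀ i : Fin d, ∑ y, Pbar x a y * φ i y = ∑ y, P x a y * φ i y)
    (hKLle : ∀ x a, KLfin (P x a) (Pbar x a) ≤ KLfin (P x a) (Phat x a))
    (ε c₁ : ℝ)
    (hε : ε = ⨆ x, ⨆ a, Real.sqrt (KLfin (P x a) (Phat x a)))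
    (hc₁ : c₁ = γ * Real.sqrt 2 / (1 - γ)) :
    ∀ π : S → A → ℝ, (∀ x a, 0 ≤ π x a) → (∀ x, ∑ a, π x a = 1) →
      ∀ w : Fin d → ℝ,
        supNorm (fun x => stocVal γ r P π x - stocVal γ r Pbar π x) ≤
          c₁ * ε * supNorm (fun x => stocVal γ r P π x - ∑ i, w i * φ i x) := by
  intro π hπ0 hπ1 w
  set M : Matrix S S ℝ := stocMat P π with hMdef
  set Mb : Matrix S S ℝ := stocMat Pbar π with hMbdef
  -- row-stochasticity
  have hstoc0 : ∀ (K : S → A → S → ℝ), (∀ x a y, 0 ≤ K x a y) →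
      ∀ x y, 0 ≤ stocMat K π x y := by
    intro K hK x y
    exact Finset.sum_nonneg fun a _ => mul_nonneg (hπ0 x a) (hK x a y)
  have hstoc1 : ∀ (K : S → A → S → ℝ), (∀ x a, ∑ y, K x a y = 1) →
      ∀ x, ∑ y, stocMat K π x y = 1 := by
    intro K hK x
    show ∑ y, ∑ a, π x a * K x a y = 1
    rw [Finset.sum_comm]
    calc ∑ a, ∑ y, π x a * K x a y = ∑ a, π x a * ∑ y, K x a y := by
          simp [Finset.mul_sum]
      _ = 1 := by simp only [hK, mul_one]; exact hπ1 x
  have hM0 := hstoc0 P hP0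
  have hM1 := hstoc1 P hP1
  have hMb0 := hstoc0 Pbar hPbar0
  have hMb1 := hstoc1 Pbar hPbar1
  set Bp : Matrix S S ℝ := (1 : Matrix S S ℝ) - γ • M with hBpdef
  set Bb : Matrix S S ℝ := (1 : Matrix S S ℝ) - γ • Mb with hBbdef
  have hUp : IsUnit Bp := isUnit_one_sub_smul hγ0 hγ1 M hM0 hM1
  have hUb : IsUnit Bb := isUnit_one_sub_smul hγ0 hγ1 Mb hMb0 hMb1
  set rπ : S → ℝ := fun x => ∑ a, π x a * r x a with hrπ
  set V : S → ℝ := stocVal γ r P π with hVdef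
  set Vb : S → ℝ := stocVal γ r Pbar π with hVbdef
  have hVeq : V = Bp⁻¹.mulVec rπ := rfl
  have hVbeq : Vb = Bb⁻¹.mulVec rπ := rfl
  have hBpV : Bp.mulVec V = rπ := by
    rw [hVeq, Matrix.mulVec_mulVec, Matrix.mul_nonsing_inv _
      ((Matrix.isUnit_iff_isUnit_det _).mp hUp), Matrix.one_mulVec]
  have hBbVb : Bb.mulVec Vb = rπ := by
    rw [hVbeq, Matrix.mulVec_mulVec, Matrix.mul_nonsing_inv _
      ((Matrix.isUnit_iff_isUnit_det _).mp hUb), Matrix.one_mulVec]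
  set D : S → ℝ := V - Vb with hDdef
  have hkey : Bb.mulVec D = γ • ((M - Mb).mulVec V) := by
    have hdiff : Bb - Bp = γ • (M - Mb) := by
      rw [hBbdef, hBpdef, smul_sub]
      abel
    calc Bb.mulVec D = Bb.mulVec V - Bb.mulVec Vb := Matrix.mulVec_sub _ _ _
      _ = Bb.mulVec V - Bp.mulVec V := by rw [hBbVb, hBpV]
      _ = (Bb - Bp).mulVec V := (Matrix.sub_mulVec _ _ _).symm
      _ = (γ • (M - Mb)).mulVec V := by rw [hdiff]
      _ = γ • ((M - Mb).mulVec V) := Matrix.smul_mulVec _ _ _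
  set Φ : S → ℝ := fun x => ∑ i, w i * φ i x with hΦdef
  -- moment matching: (M - Mb).mulVec Φ = 0
  have hker : ∀ (K : S → A → S → ℝ) x, (stocMat K π).mulVec Φ x
      = ∑ a, π x a * ∑ i, w i * (∑ y, K x a y * φ i y) := by
    intro K x
    have hinner : ∀ a, ∑ y, K x a y * Φ y = ∑ i, w i * (∑ y, K x a y * φ i y) := by
      intro a
      have h1 : ∀ y, K x a y * Φ y = ∑ i, w i * (K x a y * φ i y) := by
        intro y
        rw [hΦdef, Finset.mul_sum]
        exact Finset.sum_congr rfl fun i _ => by ring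
      calc ∑ y, K x a y * Φ y = ∑ y, ∑ i, w i * (K x a y * φ i y) :=
            Finset.sum_congr rfl fun y _ => h1 y
        _ = ∑ i, ∑ y, w i * (K x a y * φ i y) := Finset.sum_comm
        _ = ∑ i, w i * (∑ y, K x a y * φ i y) :=
            Finset.sum_congr rfl fun i _ => (Finset.mul_sum _ _ _).symm
    calc (stocMat K π).mulVec Φ x = ∑ y, (∑ a, π x a * K x a y) * Φ y := rfl
      _ = ∑ y, ∑ a, π x a * (K x a y * Φ y) := by
          apply Finset.sum_congr rfl
          intro y _
          rw [Finset.sum_mul]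
          exact Finset.sum_congr rfl fun a _ => by ring
      _ = ∑ a, ∑ y, π x a * (K x a y * Φ y) := Finset.sum_comm
      _ = ∑ a, π x a * ∑ y, K x a y * Φ y :=
          Finset.sum_congr rfl fun a _ => (Finset.mul_sum _ _ _).symm
      _ = ∑ a, π x a * ∑ i, w i * (∑ y, K x a y * φ i y) :=
          Finset.sum_congr rfl fun a _ => by rw [hinner a]
  have hphi : (M - Mb).mulVec Φ = 0 := by
    funext x
    have h1 : (M - Mb).mulVec Φ x = M.mulVec Φ x - Mb.mulVec Φ x := by
      rw [Matrix.sub_mulVec]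
      rfl
    rw [h1, hMdef, hMbdef, hker P x, hker Pbar x]
    simp only [hmatch]
    simp
  -- V can be replaced by V - Φ in (M - Mb).mulVec V
  have hrepl : (M - Mb).mulVec V = (M - Mb).mulVec (V - Φ) := by
    rw [Matrix.mulVec_sub, hphi, sub_zero]
  -- ε is nonneg and dominates each sqrt-KL
  have hεge : ∀ x a, Real.sqrt (KLfin (P x a) (Phat x a)) ≤ ε := by
    intro x a
    rw [hε]
    have i1 : Real.sqrt (KLfin (P x a) (Phat x a))
        ≤ ⨆ a', Real.sqrt (KLfin (P x a') (Phat x a')) :=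
      le_ciSup (f := fun a' => Real.sqrt (KLfin (P x a') (Phat x a')))
        (Set.Finite.bddAbove (Set.finite_range _)) a
    have i2 : (⨆ a', Real.sqrt (KLfin (P x a') (Phat x a')))
        ≤ ⨆ x', ⨆ a', Real.sqrt (KLfin (P x' a') (Phat x' a')) :=
      le_ciSup (f := fun x' => ⨆ a', Real.sqrt (KLfin (P x' a') (Phat x' a')))
        (Set.Finite.bddAbove (Set.finite_range _)) x
    exact le_trans i1 i2
  have hε0 : 0 ≤ ε := by
    obtain ⟨x⟩ := (inferInstance : Nonempty S)
    obtain ⟨a⟩ := (inferInstance : Nonempty A)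
    exact le_trans (Real.sqrt_nonneg _) (hεge x a)
  -- row L1 bound
  have hrow : ∀ x, ∑ y, |M x y - Mb x y| ≤ Real.sqrt 2 * ε := by
    intro x
    have hterm : ∀ y, |M x y - Mb x y| ≤ ∑ a, π x a * |P x a y - Pbar x a y| := by
      intro y
      have he : M x y - Mb x y = ∑ a, π x a * (P x a y - Pbar x a y) := by
        rw [hMdef, hMbdef]
        show (∑ a, π x a * P x a y) - (∑ a, π x a * Pbar x a y) = _
        rw [← Finset.sum_sub_distrib]
        exact Finset.sum_congr rfl fun a _ => by ring
      rw [he]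
      calc |∑ a, π x a * (P x a y - Pbar x a y)|
          ≤ ∑ a, |π x a * (P x a y - Pbar x a y)| := Finset.abs_sum_le_sum_abs _ _
        _ = ∑ a, π x a * |P x a y - Pbar x a y| :=
            Finset.sum_congr rfl fun a _ => by rw [abs_mul, abs_of_nonneg (hπ0 x a)]
    have hl1 : ∀ a, ∑ y, |P x a y - Pbar x a y| ≤ Real.sqrt 2 * ε := by
      intro a
      calc ∑ y, |P x a y - Pbar x a y|
          ≤ Real.sqrt (2 * KLfin (P x a) (Pbar x a)) :=
            pinsker_fin (P x a) (Pbar x a) (hP0 x a) (hPbar0 x a) (hP1 x a)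
              (hPbar1 x a) (hsuppbar x a)
        _ ≤ Real.sqrt (2 * KLfin (P x a) (Phat x a)) := by
            apply Real.sqrt_le_sqrt
            nlinarith [hKLle x a]
        _ = Real.sqrt 2 * Real.sqrt (KLfin (P x a) (Phat x a)) :=
            Real.sqrt_mul (by norm_num) _
        _ ≤ Real.sqrt 2 * ε :=
            mul_le_mul_of_nonneg_left (hεge x a) (Real.sqrt_nonneg 2)
    calc ∑ y, |M x y - Mb x y| ≤ ∑ y, ∑ a, π x a * |P x a y - Pbar x a y| :=
          Finset.sum_le_sum fun y _ => hterm y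
      _ = ∑ a, π x a * ∑ y, |P x a y - Pbar x a y| := by
          rw [Finset.sum_comm]
          exact Finset.sum_congr rfl fun a _ => (Finset.mul_sum _ _ _).symm
      _ ≤ ∑ a, π x a * (Real.sqrt 2 * ε) :=
          Finset.sum_le_sum fun a _ => mul_le_mul_of_nonneg_left (hl1 a) (hπ0 x a)
      _ = Real.sqrt 2 * ε := by rw [← Finset.sum_mul, hπ1, one_mul]
  -- bound on supNorm ((M - Mb).mulVec (V - Φ))
  set K : ℝ := supNorm (fun x => V x - Φ x) with hKdef
  have hVΦ : (V - Φ : S → ℝ) = fun x => V x - Φ x := rfl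
  have hK0 : 0 ≤ K := supNorm_nonneg _
  have h5 : supNorm ((M - Mb).mulVec (V - Φ)) ≤ Real.sqrt 2 * ε * K := by
    apply supNorm_le
    intro x
    calc |(M - Mb).mulVec (V - Φ) x| = |∑ y, (M x y - Mb x y) * (V - Φ) y| := rfl
      _ ≤ ∑ y, |(M x y - Mb x y) * (V - Φ) y| := Finset.abs_sum_le_sum_abs _ _
      _ ≤ ∑ y, |M x y - Mb x y| * K := by
          apply Finset.sum_le_sum
          intro y _
          rw [abs_mul]
          apply mul_le_mul_of_nonneg_left _ (abs_nonneg _)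
          rw [hKdef]
          exact abs_le_supNorm (fun x => V x - Φ x) y
      _ = (∑ y, |M x y - Mb x y|) * K := (Finset.sum_mul _ _ _).symm
      _ ≤ Real.sqrt 2 * ε * K := mul_le_mul_of_nonneg_right (hrow x) hK0
  -- assemble
  have hchain : (1 - γ) * supNorm D ≤ γ * (Real.sqrt 2 * ε * K) := by
    have h1 : (1 - γ) * supNorm D ≤ supNorm (Bb.mulVec D) :=
      contraction_bound hγ0 hγ1 Mb hMb0 hMb1 D
    have h2 : supNorm (Bb.mulVec D) ≤ γ * supNorm ((M - Mb).mulVec (V - Φ)) := by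
      rw [hkey, hrepl]
      apply supNorm_le
      intro x
      have : (γ • ((M - Mb).mulVec (V - Φ))) x = γ * ((M - Mb).mulVec (V - Φ)) x := rfl
      rw [this, abs_mul, abs_of_nonneg hγ0]
      exact mul_le_mul_of_nonneg_left (abs_le_supNorm _ x) hγ0
    have h3 : γ * supNorm ((M - Mb).mulVec (V - Φ)) ≤ γ * (Real.sqrt 2 * ε * K) :=
      mul_le_mul_of_nonneg_left h5 hγ0
    linarith
  have hgoal : supNorm (fun x => V x - Vb x) = supNorm D := rfl
  show supNorm (fun x => V x - Vb x) ≤ c₁ * ε * K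
  rw [hgoal, hc₁]
  have hγpos : (0:ℝ) < 1 - γ := by linarith
  rw [div_mul_eq_mul_div, div_mul_eq_mul_div, le_div_iff₀ hγpos]
  nlinarith [hchain]
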